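/- Let p ≥ 5 be a prime and let G = ⟨a, b⟩ be a GGS-group acting on the regular p-adic rooted tree T. Suppose the defining vector (e₁,…,e_{p−1}) ∈ (Z/pZ)^{p−1} of b is non-constant and all its entries e₁,…,e_{p−1} are non-zero. Then G satisfies condition (†): whenever u, u', v are vertices of T such that u and u' are incomparable and u < v, there exists g ∈ G with (u')^g = u' but v^g ≠ v. -/

import Mathlib

namespace GMS

abbrev Vtx (p : ℕ) := List (Fin p)

def applyP {p : ℕ} : (Vtx p → Equiv.Perm (Fin p)) → Vtx p → Vtx p
  | _, [] => []
  | f, x :: ω => f [] x :: applyP (fun τ => f (x :: τ)) ω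

def invApplyP {p : ℕ} : (Vtx p → Equiv.Perm (Fin p)) → Vtx p → Vtx p
  | _, [] => []
  | f, y :: ω => (f []).symm y :: invApplyP (fun τ => f ((f []).symm y :: τ)) ω

theorem applyP_invApplyP {p : ℕ} (f : Vtx p → Equiv.Perm (Fin p)) (ω : Vtx p) :
    applyP f (invApplyP f ω) = ω := by
  induction ω generalizing f with
  | nil => rfl
  | cons y ω ih => simp [applyP, invApplyP, ih]

theorem invApplyP_applyP {p : ℕ} (f : Vtx p → Equiv.Perm (Fin p)) (ω : Vtx p) :
    invApplyP f (applyP f ω) = ω := by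
  induction ω generalizing f with
  | nil => rfl
  | cons x ω ih => simp [applyP, invApplyP, ih]

def toPerm {p : ℕ} (f : Vtx p → Equiv.Perm (Fin p)) : Equiv.Perm (Vtx p) :=
  ⟨applyP f, invApplyP f, invApplyP_applyP f, applyP_invApplyP f⟩

def treeAut (p : ℕ) : Subgroup (Equiv.Perm (Vtx p)) where
  carrier := {f | ∀ ω ω' : Vtx p, ω <+: ω' → f ω <+: f ω' ∧ f.symm ω <+: f.symm ω'}
  one_mem' := fun _ _ h => ⟨h, h⟩
  mul_mem' := by
    intro f g hf hg ω ω' h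
    exact ⟨(hf _ _ (hg _ _ h).1).1, (hg _ _ (hf _ _ h).2).2⟩
  inv_mem' := by
    intro f hf ω ω' h
    exact ⟨(hf _ _ h).2, (hf _ _ h).1⟩

theorem applyP_append {p : ℕ} (f : Vtx p → Equiv.Perm (Fin p)) (ω t : Vtx p) :
    applyP f (ω ++ t) = applyP f ω ++ applyP (fun τ => f (ω ++ τ)) t := by
  induction ω generalizing f with
  | nil => rfl
  | cons x ω ih => simp [applyP, ih]

theorem invApplyP_append {p : ℕ} (f : Vtx p → Equiv.Perm (Fin p)) (ω t : Vtx p) :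
    invApplyP f (ω ++ t) =
      invApplyP f ω ++ invApplyP (fun τ => f (invApplyP f ω ++ τ)) t := by
  induction ω generalizing f with
  | nil => rfl
  | cons x ω ih => simp [invApplyP, ih]

theorem toPerm_mem_treeAut {p : ℕ} (f : Vtx p → Equiv.Perm (Fin p)) :
    toPerm f ∈ treeAut p := by
  intro ω ω' h
  obtain ⟨t, rfl⟩ := h
  exact ⟨⟨_, (applyP_append f ω t).symm⟩, ⟨_, (invApplyP_append f ω t).symm⟩⟩

/-- The `p`-cycle `x ↦ x + 1` on `Fin p`. -/
def rootCycle (p : ℕ) [NeZero p] : Equiv.Perm (Fin p) := Equiv.addRight 1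

/-- The rooted automorphism `a`, cyclically permuting the first-level subtrees. -/
def aAut (p : ℕ) [NeZero p] : Equiv.Perm (Vtx p) :=
  toPerm (fun ω => if ω = [] then rootCycle p else 1)

/-- Conversion of a non-zero residue position to an index in `Fin (p-1)`. -/
def offIdx {p : ℕ} (hp1 : 1 < p) (k : Fin p) : Fin (p - 1) :=
  ⟨k.val - 1, by have := k.isLt; omega⟩

/-- The portrait of a directed automorphism with directing path `c, cc, ccc, …` and
defining vector `e`: its section at the first-level vertex `c` is itself, and its
section at a first-level vertex `c + k` (for `k ≠ 0`) is `a^{e_k}`. -/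
def dirPort {p : ℕ} [NeZero p] (hp1 : 1 < p) (c : Fin p) (e : Fin (p - 1) → ZMod p) :
    Vtx p → Equiv.Perm (Fin p)
  | [] => 1
  | [x] => if x = c then 1 else rootCycle p ^ (e (offIdx hp1 (x - c))).val
  | x :: y :: ω => if x = c then dirPort hp1 c e (y :: ω) else 1

/-- The directed automorphism with directing path `c, cc, ccc, …` and defining
vector `e`; it satisfies `ψ₁(b) = (…, a^{e_k} at position c + k, …, b at position c, …)`. -/
def dirAut {p : ℕ} [NeZero p] (hp1 : 1 < p) (c : Fin p) (e : Fin (p - 1) → ZMod p) :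
    Equiv.Perm (Vtx p) :=
  toPerm (dirPort hp1 c e)

/-- Defining data for a generalised multi-edge spinal group in standard form:
for each `j`, an `r j`-tuple of linearly independent defining vectors in `(ℤ/pℤ)^{p-1}`. -/
structure SpinalData (p : ℕ) where
  r : Fin p → ℕ
  r_le : ∀ j, r j ≤ p - 1
  r_ne : ∃ j, r j ≠ 0
  e : (j : Fin p) → Fin (r j) → Fin (p - 1) → ZMod p
  indep : ∀ j, LinearIndependent (ZMod p) (e j)

/-- The directing-path letter of the `j`-th family (`j` is 0-indexed; the paper's
family `j+1` is directed along the constant path with letter `p - j - 1`). -/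
def pathLetter {p : ℕ} [NeZero p] (j : Fin p) : Fin p := -(j + 1)

/-- The directed generator `b^{(j)}_i`. -/
def SpinalData.gen {p : ℕ} [NeZero p] (D : SpinalData p) (hp1 : 1 < p)
    (j : Fin p) (i : Fin (D.r j)) : Equiv.Perm (Vtx p) :=
  dirAut hp1 (pathLetter j) (D.e j i)

/-- The generating set `{a} ∪ {b^{(j)}_i}`. -/
def SpinalData.genSet {p : ℕ} [NeZero p] (D : SpinalData p) (hp1 : 1 < p) :
    Set (Equiv.Perm (Vtx p)) :=
  insert (aAut p) {g | ∃ j i, g = D.gen hp1 j i}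

/-- The generalised multi-edge spinal group in standard form associated to `D`. -/
def SpinalData.grp {p : ℕ} [NeZero p] (D : SpinalData p) (hp1 : 1 < p) :
    Subgroup (Equiv.Perm (Vtx p)) :=
  Subgroup.closure (D.genSet hp1)

theorem aAut_mem_grp {p : ℕ} [NeZero p] (D : SpinalData p) (hp1 : 1 < p) :
    aAut p ∈ D.grp hp1 :=
  Subgroup.subset_closure (Set.mem_insert _ _)

theorem gen_mem_grp {p : ℕ} [NeZero p] (D : SpinalData p) (hp1 : 1 < p)
    (j : Fin p) (i : Fin (D.r j)) : D.gen hp1 j i ∈ D.grp hp1 :=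
  Subgroup.subset_closure (Set.mem_insert_iff.mpr (Or.inr ⟨j, i, rfl⟩))

/-- `ψ₁(g) = (s 0, …, s (p-1))`: the element `g` stabilises the first level and has
section `s x` at the first-level vertex `x`. -/
def hasSections {p : ℕ} (g : Equiv.Perm (Vtx p)) (s : Fin p → Equiv.Perm (Vtx p)) : Prop :=
  ∀ (x : Fin p) (τ : Vtx p), g (x :: τ) = x :: s x τ

/-- `g` fixes the vertex `u` and acts on the subtree rooted at `u` as `s` (under the
natural identification of the subtree with the whole tree). -/
def sectionAt {p : ℕ} (u : Vtx p) (g s : Equiv.Perm (Vtx p)) : Prop :=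
  ∀ τ : Vtx p, g (u ++ τ) = u ++ s τ

/-- The pointwise stabiliser of the `n`-th level of the tree. -/
def levelStab (p : ℕ) (n : ℕ) : Subgroup (Equiv.Perm (Vtx p)) where
  carrier := {g | ∀ ω : Vtx p, ω.length = n → g ω = ω}
  one_mem' := fun _ _ => rfl
  mul_mem' := by
    intro f g hf hg ω hω
    have := hg ω hω
    simp only [Equiv.Perm.mul_apply, this]
    exact hf ω hω
  inv_mem' := by
    intro f hf ω hω
    have := hf ω hω
    calc f⁻¹ ω = f⁻¹ (f ω) := by rw [this]
    _ = ω := f.symm_apply_apply ω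

/-- Spherical transitivity: `G` acts transitively on every level of the tree. -/
def SphericallyTransitive (p : ℕ) (G : Subgroup (Equiv.Perm (Vtx p))) : Prop :=
  ∀ ω ω' : Vtx p, ω.length = ω'.length → ∃ g ∈ G, g ω = ω'

/-- `G` is fractal: it is spherically transitive and for every vertex `u`, the
restriction to the subtree rooted at `u` of the stabiliser of `u` in `G` is `G` itself. -/
def Fractal (p : ℕ) (G : Subgroup (Equiv.Perm (Vtx p))) : Prop :=
  SphericallyTransitive p G ∧
    ∀ (u : Vtx p) (s : Equiv.Perm (Vtx p)), s ∈ G ↔ ∃ g ∈ G, sectionAt u g s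

/-- `G` is regular branch over `K`: `G` is fractal, `K` is a non-trivial subgroup of
`Stab_G(1)` of finite index in `G`, and `K × ⋯ × K ⊆ ψ₁(K)`. -/
def RegularBranch (p : ℕ) (G K : Subgroup (Equiv.Perm (Vtx p))) : Prop :=
  Fractal p G ∧ K ≠ ⊥ ∧ K ≤ G ⊓ levelStab p 1 ∧ K.relIndex G ≠ 0 ∧
    ∀ s : Fin p → Equiv.Perm (Vtx p), (∀ x, s x ∈ K) → ∃ g ∈ K, hasSections g s

/-- The third term `γ₃(H) = [[H,H],H]` of the lower central series. -/
def gamma3 {Γ : Type*} [Group Γ] (H : Subgroup Γ) : Subgroup Γ := ⁅(⁅H, H⁆ : Subgroup Γ), H⁆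

/-- Rigid stabiliser (in the full permutation group) of the vertex `u`: permutations
fixing every vertex not having `u` as a prefix. -/
def rigidStab (p : ℕ) (u : Vtx p) : Subgroup (Equiv.Perm (Vtx p)) where
  carrier := {g | ∀ ω : Vtx p, ¬ u <+: ω → g ω = ω}
  one_mem' := fun _ _ => rfl
  mul_mem' := by
    intro f g hf hg ω hω
    have := hg ω hω
    simp only [Equiv.Perm.mul_apply, this]
    exact hf ω hω
  inv_mem' := by
    intro f hf ω hω
    have := hf ω hω
    calc f⁻¹ ω = f⁻¹ (f ω) := by rw [this]
    _ = ω := f.symm_apply_apply ω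

/-- The rigid `n`-th level stabiliser of `G`: the subgroup generated by (equivalently,
the product of) the rigid vertex stabilisers of the vertices at level `n`. -/
def rigidLevelStab (p : ℕ) (G : Subgroup (Equiv.Perm (Vtx p))) (n : ℕ) :
    Subgroup (Equiv.Perm (Vtx p)) :=
  ⨆ u ∈ {u : Vtx p | u.length = n}, (G ⊓ rigidStab p u)

/-- `G` is a branch group (with respect to its action on the regular rooted tree). -/
def Branch (p : ℕ) (G : Subgroup (Equiv.Perm (Vtx p))) : Prop :=
  SphericallyTransitive p G ∧ ∀ n : ℕ, (rigidLevelStab p G n).relIndex G ≠ 0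

/-- An infinite group all of whose proper quotients are finite. -/
def JustInfinite {Γ : Type*} [Group Γ] (G : Subgroup Γ) : Prop :=
  (G : Set Γ).Infinite ∧
    ∀ N : Subgroup ↥G, N.Normal → N ≠ ⊥ → N.FiniteIndex

/-- The conjugate subgroup `x H x⁻¹`. -/
def conjSub {Γ : Type*} [Group Γ] (x : Γ) (H : Subgroup Γ) : Subgroup Γ :=
  H.map (MulAut.conj x).toMonoidHom

/-- `M` is a dense subgroup of `G` with respect to the profinite topology on `G`:
`NM = G` for every normal subgroup `N` of `G` of finite index. -/
def DenseIn {Γ : Type*} [Group Γ] (M G : Subgroup Γ) : Prop :=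
  M ≤ G ∧ ∀ N : Subgroup Γ, N ≤ G → (N.subgroupOf G).Normal → N.relIndex G ≠ 0 →
    G ≤ N ⊔ M

/-- The restriction to the subtree rooted at `u` of the stabiliser of `u` in `M`
(the "upper companion" subgroup `M_u`), under the identification of the subtree with
the whole tree. -/
def restrAt (p : ℕ) (u : Vtx p) (M : Subgroup (Equiv.Perm (Vtx p))) :
    Subgroup (Equiv.Perm (Vtx p)) where
  carrier := {s | ∃ g ∈ M, sectionAt u g s}
  one_mem' := ⟨1, M.one_mem, fun τ => rfl⟩
  mul_mem' := by
    rintro s s' ⟨g, hg, hgs⟩ ⟨g', hg', hgs'⟩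
    refine ⟨g * g', M.mul_mem hg hg', fun τ => ?_⟩
    simp only [Equiv.Perm.mul_apply, hgs' τ, hgs (s' τ)]
  inv_mem' := by
    rintro s ⟨g, hg, hgs⟩
    refine ⟨g⁻¹, M.inv_mem hg, fun τ => ?_⟩
    have h1 : g (u ++ s⁻¹ τ) = u ++ τ := by
      rw [hgs (s⁻¹ τ)]
      simp
    calc g⁻¹ (u ++ τ) = g⁻¹ (g (u ++ s⁻¹ τ)) := by rw [h1]
    _ = u ++ s⁻¹ τ := g.symm_apply_apply _

/-- Index `p - i` (`0`-indexed version of `i ↦ p - i` on `{1, …, p-1}`). -/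
def revIdx {p : ℕ} (k : Fin (p - 1)) : Fin (p - 1) :=
  ⟨p - 2 - k.val, by have := k.isLt; omega⟩


/-- Non-constancy of a defining vector. -/
def IsNonConstant {p : ℕ} (v : Fin (p - 1) → ZMod p) : Prop :=
  ¬ ∃ α : ZMod p, ∀ k, v k = α

/-- The regularity condition defining the subclass `𝒞_reg`: every non-empty family
of defining vectors contains a non-constant vector. -/
def SpinalData.IsReg {p : ℕ} (D : SpinalData p) : Prop :=
  ∀ j, D.r j ≠ 0 → ∃ i, IsNonConstant (D.e j i)

/-- Non-symmetry of a defining vector: `e_i ≠ e_{p-i}` for some `i`. -/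
def IsNonSymmetric {p : ℕ} (v : Fin (p - 1) → ZMod p) : Prop :=
  ∃ k, v k ≠ v (revIdx k)

/-- Membership in the class `𝒞`: subgroups of `Aut(T)` conjugate to a generalised
multi-edge spinal group in standard form. -/
def inC (p : ℕ) [NeZero p] (hp1 : 1 < p) (G : Subgroup (Equiv.Perm (Vtx p))) : Prop :=
  ∃ (D : SpinalData p) (x : Equiv.Perm (Vtx p)), x ∈ treeAut p ∧
    G = (D.grp hp1).map (MulAut.conj x).toMonoidHom

/-- Membership in the subclass `𝒞_reg`. -/
def inCreg (p : ℕ) [NeZero p] (hp1 : 1 < p) (G : Subgroup (Equiv.Perm (Vtx p))) : Prop :=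
  ∃ (D : SpinalData p) (x : Equiv.Perm (Vtx p)), x ∈ treeAut p ∧ D.IsReg ∧
    G = (D.grp hp1).map (MulAut.conj x).toMonoidHom

/-- The subgroup `⟨b^{(j)}_1, …, b^{(j)}_{r_j}⟩` generated by the `j`-th family of
directed generators. -/
def SpinalData.bFam {p : ℕ} [NeZero p] (D : SpinalData p) (hp1 : 1 < p) (j : Fin p) :
    Subgroup (Equiv.Perm (Vtx p)) :=
  Subgroup.closure (Set.range (D.gen hp1 j))

/-- `g` can be written as an alternating product
`c₀ d₀ c₁ d₁ ⋯ c_{N-1} d_{N-1} c_N` with each `cₖ` a power of `a` and each `dₖ` an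
element of one of the groups `⟨𝐛^{(j)}⟩`; the number of directed syllables is `N`. -/
def lenWitness {p : ℕ} [NeZero p] (D : SpinalData p) (hp1 : 1 < p)
    (g : Equiv.Perm (Vtx p)) (N : ℕ) : Prop :=
  ∃ (c : Fin (N + 1) → Equiv.Perm (Vtx p)) (d : Fin N → Equiv.Perm (Vtx p)),
    (∀ k, c k ∈ Subgroup.zpowers (aAut p)) ∧
    (∀ k, ∃ j, d k ∈ D.bFam hp1 j) ∧
    g = (List.ofFn fun k : Fin N => c k.castSucc * d k).prod * c (Fin.last N)

/-- The length `∂(g)`: the minimal number of directed syllables needed to express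
`g`; this coincides with the minimum over all preimages of `g` in the free product
`⟨â⟩ * ⟨𝐛̂^{(1)}⟩ * ⋯ * ⟨𝐛̂^{(p)}⟩` of the number of syllables of the normal form
lying in the directed factors. -/
noncomputable def dlen {p : ℕ} [NeZero p] (D : SpinalData p) (hp1 : 1 < p)
    (g : Equiv.Perm (Vtx p)) : ℕ :=
  sInf {N | lenWitness D hp1 g N}

set_option linter.unusedSectionVars false

open scoped Fin.NatCast Fin.IntCast Fin.CommRing

section Aux

variable {p : ℕ} [NeZero p]

lemma applyP_one (τ : Vtx p) : applyP (fun _ => (1 : Equiv.Perm (Fin p))) τ = τ := by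
  induction τ with
  | nil => rfl
  | cons x τ ih => simpa [applyP] using ih

lemma aAut_nil : aAut p [] = [] := rfl

lemma rootCycle_pow (n : ℕ) (x : Fin p) : (rootCycle p ^ n) x = x + n := by
  induction n generalizing x with
  | zero => simp
  | succ n ih =>
    rw [pow_succ, Equiv.Perm.mul_apply]
    have hx : (rootCycle p) x = x + 1 := rfl
    rw [hx, ih]
    push_cast
    ring

lemma aAut_cons (x : Fin p) (τ : Vtx p) : aAut p (x :: τ) = (x + 1) :: τ := by
  have h0 : aAut p (x :: τ) =
      applyP (fun ω => if ω = [] then rootCycle p else 1) (x :: τ) := rfl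
  rw [h0]
  simp only [applyP, if_pos rfl]
  have h1 : (fun τ' => if (x :: τ' : Vtx p) = [] then rootCycle p else 1) =
      (fun _ => (1 : Equiv.Perm (Fin p))) := by
    funext τ'; simp
  rw [h1, applyP_one]
  rfl

lemma apow_nil (n : ℕ) : ((aAut p) ^ n) [] = [] := by
  induction n with
  | zero => rfl
  | succ n ih => rw [pow_succ, Equiv.Perm.mul_apply, aAut_nil, ih]

lemma apow_cons (n : ℕ) (x : Fin p) (τ : Vtx p) :
    ((aAut p) ^ n) (x :: τ) = (x + (n : Fin p)) :: τ := by
  induction n generalizing x with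
  | zero => simp
  | succ n ih =>
    rw [pow_succ, Equiv.Perm.mul_apply, aAut_cons, ih]
    congr 1
    push_cast
    ring

lemma a_pow_p : (aAut p) ^ p = 1 := by
  ext ω
  cases ω with
  | nil => rw [apow_nil]; rfl
  | cons x τ =>
    rw [apow_cons]
    have : ((p : ℕ) : Fin p) = 0 := by
      ext
      simp [Fin.val_natCast]
    rw [this, add_zero]
    rfl

/-- bridge `Fin p → ZMod p` -/
def psi (x : Fin p) : ZMod p := (x.val : ZMod p)

lemma psi_inj : Function.Injective (psi (p := p)) := by
  intro x y h
  have hx : (psi x).val = x.val := ZMod.val_cast_of_lt x.isLt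
  have hy : (psi y).val = y.val := ZMod.val_cast_of_lt y.isLt
  have := congrArg ZMod.val h
  rw [hx, hy] at this
  exact Fin.ext this

lemma psi_natCast (n : ℕ) : psi ((n : Fin p)) = (n : ZMod p) := by
  unfold psi
  rw [Fin.val_natCast]
  exact ZMod.natCast_mod n p

lemma psi_zero : psi (0 : Fin p) = 0 := by
  simpa using psi_natCast (p := p) 0

lemma psi_add (x y : Fin p) : psi (x + y) = psi x + psi y := by
  unfold psi
  rw [Fin.add_def]
  rw [ZMod.natCast_mod]
  push_cast
  ring

lemma psi_neg (x : Fin p) : psi (-x) = - psi x := by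
  have := psi_add (-x) x
  simp only [neg_add_cancel, psi_zero] at this
  exact eq_neg_of_add_eq_zero_left this.symm

lemma psi_sub (x y : Fin p) : psi (x - y) = psi x - psi y := by
  rw [sub_eq_add_neg, psi_add, psi_neg]; ring

lemma finCast_eq_of_zmod {n : ℕ} {z : Fin p} (h : (n : ZMod p) = psi z) :
    (n : Fin p) = z :=
  psi_inj (by rw [psi_natCast, h])

lemma finCast_ne_zero_of_zmod {n : ℕ} (h : (n : ZMod p) ≠ 0) : (n : Fin p) ≠ 0 := by
  intro h0
  exact h (by rw [← psi_natCast, h0, psi_zero])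

lemma apow_congr {m n : ℕ} (h : (m : ZMod p) = (n : ZMod p)) :
    (aAut p) ^ m = (aAut p) ^ n := by
  rw [pow_eq_pow_mod m (a_pow_p (p := p)), pow_eq_pow_mod n (a_pow_p (p := p))]
  have : m % p = n % p := (ZMod.natCast_eq_natCast_iff m n p).mp h
  rw [this]

lemma apow_eq_one {m : ℕ} (h : (m : ZMod p) = 0) : (aAut p) ^ m = 1 := by
  have : (aAut p) ^ m = (aAut p) ^ (0 : ℕ) := apow_congr (by simpa using h)
  simpa using this

end Aux
section Baux

variable {p : ℕ} [NeZero p] (hp1 : 1 < p) (c : Fin p) (e : Fin (p - 1) → ZMod p)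

lemma dirPort_nil : dirPort hp1 c e [] = 1 := rfl

lemma dirAut_nil : dirAut hp1 c e [] = [] := rfl

lemma dirAut_cons (x : Fin p) (τ : Vtx p) :
    dirAut hp1 c e (x :: τ) = x ::
      (if x = c then dirAut hp1 c e τ
       else ((aAut p) ^ (e (offIdx hp1 (x - c))).val) τ) := by
  have h0 : dirAut hp1 c e (x :: τ) = applyP (dirPort hp1 c e) (x :: τ) := rfl
  rw [h0]
  simp only [applyP, dirPort_nil]
  have h1 : (1 : Equiv.Perm (Fin p)) x = x := rfl
  rw [h1]
  congr 1
  by_cases hx : x = c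
  · subst hx
    rw [if_pos rfl]
    have h2 : (fun τ' => dirPort hp1 x e (x :: τ')) = dirPort hp1 x e := by
      funext τ'
      cases τ' with
      | nil => simp [dirPort]
      | cons y ω => simp [dirPort]
    rw [h2]
    rfl
  · rw [if_neg hx]
    have h2 : (fun τ' => dirPort hp1 c e (x :: τ')) =
        (fun τ' => if τ' = [] then rootCycle p ^ (e (offIdx hp1 (x - c))).val else 1) := by
      funext τ'
      cases τ' with
      | nil => simp [dirPort, hx]
      | cons y ω => simp [dirPort, hx]
    rw [h2]
    cases τ with
    | nil => rw [apow_nil]; rfl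
    | cons z m =>
      rw [apow_cons]
      show (if ([] : Vtx p) = [] then rootCycle p ^ (e (offIdx hp1 (x - c))).val else 1) z ::
        applyP _ m = _
      rw [if_pos rfl, rootCycle_pow]
      congr 1
      have h3 : (fun τ'' => if (z :: τ'' : Vtx p) = [] then
          rootCycle p ^ (e (offIdx hp1 (x - c))).val else 1) =
          (fun _ => (1 : Equiv.Perm (Fin p))) := by
        funext τ''; simp
      rw [h3, applyP_one]

lemma dirAut_pow_nil (n : ℕ) : ((dirAut hp1 c e) ^ n) [] = [] := by
  induction n with
  | zero => rfl
  | succ n ih => rw [pow_succ, Equiv.Perm.mul_apply, dirAut_nil, ih]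

lemma dirAut_pow_cons (n : ℕ) (x : Fin p) (τ : Vtx p) :
    ((dirAut hp1 c e) ^ n) (x :: τ) = x ::
      (if x = c then ((dirAut hp1 c e) ^ n) τ
       else ((aAut p) ^ (n * (e (offIdx hp1 (x - c))).val)) τ) := by
  induction n generalizing τ with
  | zero => simp
  | succ n ih =>
    rw [pow_succ, Equiv.Perm.mul_apply, dirAut_cons]
    by_cases hx : x = c
    · rw [if_pos hx, if_pos hx, ih, if_pos hx, ← Equiv.Perm.mul_apply, ← pow_succ]
    · rw [if_neg hx, if_neg hx, ih, if_neg hx, ← Equiv.Perm.mul_apply, ← pow_add]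
      congr 2
      rw [Nat.succ_mul]

lemma dirAut_pow_p : (dirAut hp1 c e) ^ p = 1 := by
  apply Equiv.ext
  intro ω
  induction ω with
  | nil => rw [dirAut_pow_nil]; rfl
  | cons x τ ih =>
    rw [dirAut_pow_cons]
    have h1 : ((aAut p) ^ (p * (e (offIdx hp1 (x - c))).val)) = 1 :=
      apow_eq_one (by push_cast; simp)
    by_cases hx : x = c
    · rw [if_pos hx, ih]; rfl
    · rw [if_neg hx, h1]; rfl

lemma dirAut_pow_congr {m n : ℕ} (h : (m : ZMod p) = (n : ZMod p)) :
    (dirAut hp1 c e) ^ m = (dirAut hp1 c e) ^ n := by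
  rw [pow_eq_pow_mod m (dirAut_pow_p hp1 c e), pow_eq_pow_mod n (dirAut_pow_p hp1 c e)]
  have : m % p = n % p := (ZMod.natCast_eq_natCast_iff m n p).mp h
  rw [this]

/-- conjugate `a^j b a^{-j}`, with section `b` at the vertex `[j + c]`. -/
def kap (j : Fin p) : Equiv.Perm (Vtx p) :=
  (aAut p) ^ j.val * dirAut hp1 c e * (aAut p) ^ ((p - 1) * j.val)

lemma kap_cons (j x : Fin p) (τ : Vtx p) :
    kap hp1 c e j (x :: τ) = x ::
      (if x - j = c then dirAut hp1 c e τ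
       else ((aAut p) ^ (e (offIdx hp1 (x - j - c))).val) τ) := by
  unfold kap
  rw [Equiv.Perm.mul_apply, Equiv.Perm.mul_apply, apow_cons]
  have h1 : x + (((p - 1) * j.val : ℕ) : Fin p) = x - j := by
    have : (((p - 1) * j.val : ℕ) : Fin p) = -j := by
      apply finCast_eq_of_zmod
      push_cast [psi_neg]
      rw [Nat.cast_sub hp1.le]
      simp [ZMod.natCast_self, psi]
    rw [this, sub_eq_add_neg]
  rw [h1, dirAut_cons]
  rw [apow_cons]
  congr 1
  rw [Fin.cast_val_eq_self, sub_add_cancel]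

lemma kap_pow_cons (n : ℕ) (j x : Fin p) (τ : Vtx p) :
    (kap hp1 c e j ^ n) (x :: τ) = x ::
      (if x - j = c then ((dirAut hp1 c e) ^ n) τ
       else ((aAut p) ^ (n * (e (offIdx hp1 (x - j - c))).val)) τ) := by
  induction n generalizing τ with
  | zero => simp
  | succ n ih =>
    rw [pow_succ, Equiv.Perm.mul_apply, kap_cons]
    by_cases hx : x - j = c
    · rw [if_pos hx, if_pos hx, ih, if_pos hx, ← Equiv.Perm.mul_apply, ← pow_succ]
    · rw [if_neg hx, if_neg hx, ih, if_neg hx, ← Equiv.Perm.mul_apply, ← pow_add]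
      congr 2
      rw [Nat.succ_mul]

lemma kap_mem {S : Set (Equiv.Perm (Vtx p))} (haS : aAut p ∈ S) (hbS : dirAut hp1 c e ∈ S)
    (j : Fin p) : kap hp1 c e j ∈ Subgroup.closure S := by
  have ha := Subgroup.subset_closure haS
  have hb := Subgroup.subset_closure hbS
  exact mul_mem (mul_mem (pow_mem ha _) hb) (pow_mem ha _)

/- sectionAt lemmas -/
lemma sectionAt_one (u : Vtx p) : sectionAt u (1 : Equiv.Perm (Vtx p)) 1 := fun τ => rfl

lemma sectionAt_mul {u : Vtx p} {g g' σ σ' : Equiv.Perm (Vtx p)}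
    (h : sectionAt u g σ) (h' : sectionAt u g' σ') : sectionAt u (g * g') (σ * σ') := by
  intro τ
  rw [Equiv.Perm.mul_apply, h' τ, h (σ' τ)]
  rfl

lemma sectionAt_pow {u : Vtx p} {g σ : Equiv.Perm (Vtx p)} (h : sectionAt u g σ) (n : ℕ) :
    sectionAt u (g ^ n) (σ ^ n) := by
  induction n with
  | zero => simpa using sectionAt_one u
  | succ n ih =>
    rw [pow_succ, pow_succ]
    exact sectionAt_mul ih h

lemma sectionAt_trans {u w : Vtx p} {g σ σ' : Equiv.Perm (Vtx p)}
    (h : sectionAt u g σ) (h' : sectionAt w σ σ') : sectionAt (u ++ w) g σ' := by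
  intro τ
  rw [List.append_assoc, h (w ++ τ), h' τ, List.append_assoc]

lemma sectionAt_congr {u : Vtx p} {g σ σ' : Equiv.Perm (Vtx p)}
    (h : sectionAt u g σ) (hσ : σ = σ') : sectionAt u g σ' := hσ ▸ h

end Baux
section Frac

variable {p : ℕ} [NeZero p]

lemma fin_one_ne_zero (hp1 : 1 < p) : (1 : Fin p) ≠ 0 := by
  intro h
  have h1 : (1 : Fin p).val = 1 % p := by
    rw [show (1 : Fin p) = ((1 : ℕ) : Fin p) by simp, Fin.val_natCast]
  rw [h] at h1
  simp [Nat.mod_eq_of_lt hp1] at h1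

variable (hp : p.Prime) (c : Fin p) (e : Fin (p - 1) → ZMod p)

lemma b_mem_restr (y : Fin p) :
    dirAut hp.one_lt c e ∈
      restrAt p [y] (Subgroup.closure {aAut p, dirAut hp.one_lt c e}) := by
  refine ⟨kap hp.one_lt c e (y - c), kap_mem _ _ _ (by simp) (by simp) _, fun τ => ?_⟩
  have h1 : ([y] ++ τ : Vtx p) = y :: τ := rfl
  rw [h1, kap_cons, if_pos (sub_sub_cancel y c)]
  rfl

lemma a_mem_restr (hnz : ∀ k, e k ≠ 0) (y : Fin p) :
    aAut p ∈ restrAt p [y] (Subgroup.closure {aAut p, dirAut hp.one_lt c e}) := by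
  haveI := Fact.mk hp
  set n := ((e (offIdx hp.one_lt 1))⁻¹).val with hn
  refine ⟨kap hp.one_lt c e (y - c - 1) ^ n,
    pow_mem (kap_mem _ _ _ (by simp) (by simp) _) _, fun τ => ?_⟩
  have h1 : ([y] ++ τ : Vtx p) = y :: τ := rfl
  have h2 : y - (y - c - 1) = c + 1 := by ring
  have h3 : y - (y - c - 1) ≠ c := by
    rw [h2]
    intro hc
    exact fin_one_ne_zero hp.one_lt (by linear_combination hc)
  have h4 : y - (y - c - 1) - c = 1 := by rw [h2]; ring
  rw [h1, kap_pow_cons, if_neg h3, h4]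
  have h5 : (aAut p) ^ (n * (e (offIdx hp.one_lt 1)).val) = aAut p := by
    have : ((n * (e (offIdx hp.one_lt 1)).val : ℕ) : ZMod p) = ((1 : ℕ) : ZMod p) := by
      push_cast
      rw [hn, ZMod.natCast_rightInverse, ZMod.natCast_rightInverse]
      rw [inv_mul_cancel₀ (hnz _)]
    rw [apow_congr this, pow_one]
  rw [h5]
  rfl

lemma exists_sectionAt (hnz : ∀ k, e k ≠ 0) (w : Vtx p) (h : Equiv.Perm (Vtx p))
    (hh : h ∈ Subgroup.closure {aAut p, dirAut hp.one_lt c e}) :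
    ∃ g ∈ Subgroup.closure {aAut p, dirAut hp.one_lt c e}, sectionAt w g h := by
  induction w generalizing h with
  | nil => exact ⟨h, hh, fun τ => rfl⟩
  | cons y w' ih =>
    obtain ⟨g₁, hg₁, hs₁⟩ := ih h hh
    have hsub : Subgroup.closure {aAut p, dirAut hp.one_lt c e} ≤
        restrAt p [y] (Subgroup.closure {aAut p, dirAut hp.one_lt c e}) := by
      rw [Subgroup.closure_le]
      rintro z (rfl | rfl)
      · exact a_mem_restr hp c e hnz y
      · exact b_mem_restr hp c e y
    obtain ⟨g₂, hg₂, hs₂⟩ := hsub hg₁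
    exact ⟨g₂, hg₂, sectionAt_trans hs₂ hs₁⟩

end Frac
section Words

variable {p : ℕ} [NeZero p] (hp1 : 1 < p) (c : Fin p) (e : Fin (p - 1) → ZMod p)

lemma pm1_cast : ((p - 1 : ℕ) : ZMod p) = -1 := by
  have h1 : (1 : ℕ) ≤ p := Nat.one_le_iff_ne_zero.mpr (NeZero.ne p)
  rw [Nat.cast_sub h1, ZMod.natCast_self]
  simp

lemma letter_offIdx (k : Fin (p - 1)) :
    offIdx hp1 (((k.val + 1 : ℕ) : Fin p)) = k := by
  apply Fin.ext
  simp only [offIdx, Fin.val_natCast]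
  rw [Nat.mod_eq_of_lt (by have := k.isLt; omega)]
  omega

lemma letter_ne_zero (k : Fin (p - 1)) : (((k.val + 1 : ℕ) : Fin p)) ≠ 0 := by
  intro h
  have hv : (((k.val + 1 : ℕ) : Fin p)).val = k.val + 1 := by
    rw [Fin.val_natCast]
    exact Nat.mod_eq_of_lt (by have := k.isLt; omega)
  rw [h] at hv
  simp at hv

/-- section of `kap j` at a vertex off the spine -/
lemma kap_sec_a (j x : Fin p) (h : x - j ≠ c) :
    sectionAt [x] (kap hp1 c e j) ((aAut p) ^ (e (offIdx hp1 (x - j - c))).val) := by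
  intro τ
  have h1 : ([x] ++ τ : Vtx p) = x :: τ := rfl
  rw [h1, kap_cons, if_neg h]
  rfl

lemma kap_pow_sec_a (j x : Fin p) (h : x - j ≠ c) (n : ℕ) :
    sectionAt [x] (kap hp1 c e j ^ n) ((aAut p) ^ (n * (e (offIdx hp1 (x - j - c))).val)) := by
  intro τ
  have h1 : ([x] ++ τ : Vtx p) = x :: τ := rfl
  rw [h1, kap_pow_cons, if_neg h]
  rfl

/-- the word `C(M) = κ_{j'}^{p-1} κ_i^{(p-1)M} κ_{j'} κ_i^M`. -/
def wordC (jj ii : Fin p) (M : ℕ) : Equiv.Perm (Vtx p) :=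
  kap hp1 c e jj ^ (p - 1) * kap hp1 c e ii ^ ((p - 1) * M) *
    kap hp1 c e jj * kap hp1 c e ii ^ M

/-- the word `E(M) = κ_i^{(p-1)M} κ_{j'}^{p-1} κ_i^M κ_{j'}`. -/
def wordE (jj ii : Fin p) (M : ℕ) : Equiv.Perm (Vtx p) :=
  kap hp1 c e ii ^ ((p - 1) * M) * kap hp1 c e jj ^ (p - 1) *
    kap hp1 c e ii ^ M * kap hp1 c e jj

lemma wordC_mem {S : Set (Equiv.Perm (Vtx p))} (haS : aAut p ∈ S)
    (hbS : dirAut hp1 c e ∈ S) (jj ii : Fin p) (M : ℕ) :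
    wordC hp1 c e jj ii M ∈ Subgroup.closure S := by
  have h := kap_mem hp1 c e haS hbS
  exact mul_mem (mul_mem (mul_mem (pow_mem (h jj) _) (pow_mem (h ii) _)) (h jj))
    (pow_mem (h ii) _)

lemma wordE_mem {S : Set (Equiv.Perm (Vtx p))} (haS : aAut p ∈ S)
    (hbS : dirAut hp1 c e ∈ S) (jj ii : Fin p) (M : ℕ) :
    wordE hp1 c e jj ii M ∈ Subgroup.closure S := by
  have h := kap_mem hp1 c e haS hbS
  exact mul_mem (mul_mem (mul_mem (pow_mem (h ii) _) (pow_mem (h jj) _)) (pow_mem (h ii) _))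
    (h jj)

lemma wordC_sec_x (jj ii xx : Fin p) (h1 : xx - jj ≠ c) (h2 : xx - ii ≠ c) (M : ℕ) :
    sectionAt [xx] (wordC hp1 c e jj ii M) 1 := by
  have s1 := kap_pow_sec_a hp1 c e jj xx h1 (p - 1)
  have s2 := kap_pow_sec_a hp1 c e ii xx h2 ((p - 1) * M)
  have s3 := kap_sec_a hp1 c e jj xx h1
  have s4 := kap_pow_sec_a hp1 c e ii xx h2 M
  refine sectionAt_congr (sectionAt_mul (sectionAt_mul (sectionAt_mul s1 s2) s3) s4) ?_
  rw [← pow_add]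
  rw [show (aAut p) ^ (e (offIdx hp1 (xx - jj - c))).val =
    (aAut p) ^ (1 * (e (offIdx hp1 (xx - jj - c))).val) by rw [one_mul]]
  rw [← pow_add, ← pow_add]
  apply apow_eq_one
  simp only [Nat.cast_add, Nat.cast_mul, pm1_cast, Nat.cast_one]
  ring

lemma wordE_sec_x (jj ii xx : Fin p) (h1 : xx - jj ≠ c) (h2 : xx - ii ≠ c) (M : ℕ) :
    sectionAt [xx] (wordE hp1 c e jj ii M) 1 := by
  have s1 := kap_pow_sec_a hp1 c e ii xx h2 ((p - 1) * M)
  have s2 := kap_pow_sec_a hp1 c e jj xx h1 (p - 1)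
  have s3 := kap_pow_sec_a hp1 c e ii xx h2 M
  have s4 := kap_sec_a hp1 c e jj xx h1
  refine sectionAt_congr (sectionAt_mul (sectionAt_mul (sectionAt_mul s1 s2) s3) s4) ?_
  rw [show (aAut p) ^ (e (offIdx hp1 (xx - jj - c))).val =
    (aAut p) ^ (1 * (e (offIdx hp1 (xx - jj - c))).val) by rw [one_mul]]
  rw [← pow_add, ← pow_add, ← pow_add]
  apply apow_eq_one
  simp only [Nat.cast_add, Nat.cast_mul, pm1_cast, Nat.cast_one]
  ring

end Words
section Words2

variable {p : ℕ} [NeZero p] (hp1 : 1 < p) (c : Fin p) (e : Fin (p - 1) → ZMod p)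

lemma kap_sec2 (x' y j : Fin p) (hj : x' - j = c) (hy : y ≠ c) :
    sectionAt [x', y] (kap hp1 c e j) ((aAut p) ^ (e (offIdx hp1 (y - c))).val) := by
  intro τ
  have h1 : ([x', y] ++ τ : Vtx p) = x' :: y :: τ := rfl
  rw [h1, kap_cons, if_pos hj, dirAut_cons, if_neg hy]
  rfl

lemma kap_sec2_spine (x' j : Fin p) (hj : x' - j = c) :
    sectionAt [x', c] (kap hp1 c e j) (dirAut hp1 c e) := by
  intro τ
  have h1 : ([x', c] ++ τ : Vtx p) = x' :: c :: τ := rfl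
  rw [h1, kap_cons, if_pos hj, dirAut_cons, if_pos rfl]
  rfl

lemma cast_neg_aux {M E : ℕ} {V : Fin p} (hV : ((M * E : ℕ) : Fin p) = V) :
    (((p - 1) * M * E : ℕ) : Fin p) = -V := by
  apply finCast_eq_of_zmod
  rw [psi_neg]
  have hVz : psi V = ((M * E : ℕ) : ZMod p) := by rw [← hV, psi_natCast]
  rw [hVz]
  push_cast [pm1_cast]
  ring

lemma wordC_sec2 (x' y jj ii : Fin p) (M : ℕ) (V : Fin p)
    (hj : x' - jj = c) (hi : x' - ii ≠ c)
    (hV : ((M * (e (offIdx hp1 (x' - ii - c))).val : ℕ) : Fin p) = V)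
    (hyV : y + V ≠ c) (hy : y ≠ c) :
    sectionAt [x', y] (wordC hp1 c e jj ii M)
      ((aAut p) ^ ((p - 1) * (e (offIdx hp1 (y - c))).val) *
        (aAut p) ^ (e (offIdx hp1 (y + V - c))).val) := by
  have hW := cast_neg_aux (p := p) hV
  intro τ
  have h1 : ([x', y] ++ τ : Vtx p) = x' :: y :: τ := rfl
  rw [h1]
  unfold wordC
  simp only [Equiv.Perm.mul_apply]
  rw [kap_pow_cons, if_neg hi, apow_cons, hV]
  rw [kap_cons, if_pos hj, dirAut_cons, if_neg hyV]
  rw [kap_pow_cons, if_neg hi, apow_cons, hW]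
  rw [show y + V + -V = y by ring]
  rw [kap_pow_cons, if_pos hj, dirAut_pow_cons, if_neg hy]
  rfl

lemma wordC_sec2_spine (x' jj ii : Fin p) (M : ℕ) (V : Fin p)
    (hj : x' - jj = c) (hi : x' - ii ≠ c)
    (hV : ((M * (e (offIdx hp1 (x' - ii - c))).val : ℕ) : Fin p) = V)
    (hcV : c + V ≠ c) :
    sectionAt [x', c] (wordC hp1 c e jj ii M)
      ((dirAut hp1 c e) ^ (p - 1) *
        (aAut p) ^ (e (offIdx hp1 (c + V - c))).val) := by
  have hW := cast_neg_aux (p := p) hV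
  intro τ
  have h1 : ([x', c] ++ τ : Vtx p) = x' :: c :: τ := rfl
  rw [h1]
  unfold wordC
  simp only [Equiv.Perm.mul_apply]
  rw [kap_pow_cons, if_neg hi, apow_cons, hV]
  rw [kap_cons, if_pos hj, dirAut_cons, if_neg hcV]
  rw [kap_pow_cons, if_neg hi, apow_cons, hW]
  rw [show c + V + -V = c by ring]
  rw [kap_pow_cons, if_pos hj, dirAut_pow_cons, if_pos rfl]
  rfl

lemma wordE_sec2_spine (x' jj ii : Fin p) (M : ℕ) (V : Fin p)
    (hj : x' - jj = c) (hi : x' - ii ≠ c)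
    (hV : ((M * (e (offIdx hp1 (x' - ii - c))).val : ℕ) : Fin p) = V)
    (hcV : c + V ≠ c) :
    sectionAt [x', c] (wordE hp1 c e jj ii M)
      ((aAut p) ^ ((p - 1) * (e (offIdx hp1 (c + V - c))).val) * dirAut hp1 c e) := by
  have hW := cast_neg_aux (p := p) hV
  intro τ
  have h1 : ([x', c] ++ τ : Vtx p) = x' :: c :: τ := rfl
  rw [h1]
  unfold wordE
  simp only [Equiv.Perm.mul_apply]
  rw [kap_cons, if_pos hj, dirAut_cons, if_pos rfl]
  rw [kap_pow_cons, if_neg hi, apow_cons, hV]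
  rw [kap_pow_cons, if_pos hj, dirAut_pow_cons, if_neg hcV]
  rw [kap_pow_cons, if_neg hi, apow_cons, hW]
  rw [show c + V + -V = c by ring]
  rfl

end Words2
section MainLevel

variable {p : ℕ} [NeZero p]

lemma val_cast_zmod (z : ZMod p) : ((z.val : ℕ) : ZMod p) = z :=
  ZMod.natCast_rightInverse z

lemma main_level (hp : p.Prime) (hp5 : 5 ≤ p) (c : Fin p) (e : Fin (p - 1) → ZMod p)
    (hnc : IsNonConstant e) (hnz : ∀ k, e k ≠ 0) (x x' : Fin p) (hxx : x ≠ x')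
    (s' m : Vtx p) (hm : m ≠ []) :
    ∃ h ∈ Subgroup.closure {aAut p, dirAut hp.one_lt c e},
      h (x' :: s') = x' :: s' ∧ h (x :: m) ≠ x :: m := by
  haveI := Fact.mk hp
  obtain ⟨z, m₂, rfl⟩ : ∃ z m₂, m = z :: m₂ := by
    cases m with
    | nil => exact absurd rfl hm
    | cons z m₂ => exact ⟨z, m₂, rfl⟩
  have memS : ∀ j, kap hp.one_lt c e j ∈
      Subgroup.closure {aAut p, dirAut hp.one_lt c e} :=
    kap_mem hp.one_lt c e (by simp) (by simp)
  have memC : ∀ jj ii M, wordC hp.one_lt c e jj ii M ∈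
      Subgroup.closure {aAut p, dirAut hp.one_lt c e} :=
    fun jj ii M => wordC_mem hp.one_lt c e (by simp) (by simp) jj ii M
  have memE : ∀ jj ii M, wordE hp.one_lt c e jj ii M ∈
      Subgroup.closure {aAut p, dirAut hp.one_lt c e} :=
    fun jj ii M => wordE_mem hp.one_lt c e (by simp) (by simp) jj ii M
  obtain ⟨k₀, hk₀0, hk₀d⟩ : ∃ k₀ : Fin p, k₀ ≠ 0 ∧ k₀ ≠ x' - x := by
    have hv1 : (1 : Fin p).val = 1 := by
      rw [show (1 : Fin p) = ((1 : ℕ) : Fin p) by norm_cast, Fin.val_natCast]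
      exact Nat.mod_eq_of_lt (by omega)
    have hv2 : (2 : Fin p).val = 2 := by
      rw [show (2 : Fin p) = ((2 : ℕ) : Fin p) by norm_cast, Fin.val_natCast]
      exact Nat.mod_eq_of_lt (by omega)
    by_cases hcase : x' - x = 1
    · refine ⟨2, ?_, ?_⟩
      · intro h; rw [Fin.ext_iff, hv2] at h; simp at h
      · rw [hcase]; intro h; rw [Fin.ext_iff, hv2, hv1] at h; omega
    · exact ⟨1, fun h => by rw [Fin.ext_iff, hv1] at h; simp at h,
        fun h => hcase h.symm⟩
  have hd : x' - x ≠ 0 := sub_ne_zero_of_ne (Ne.symm hxx)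
  have hj : x' - (x' - c) = c := sub_sub_cancel x' c
  have hii' : x' - (x' - c - k₀) = c + k₀ := by ring
  have hi : x' - (x' - c - k₀) ≠ c := by
    rw [hii']; intro h; exact hk₀0 (by linear_combination h)
  have hii_idx : x' - (x' - c - k₀) - c = k₀ := by rw [hii']; ring
  have hxj : x - (x' - c) ≠ c := by
    intro h; exact hd (by linear_combination -h)
  have hxi : x - (x' - c - k₀) ≠ c := by
    intro h; exact hk₀d (by linear_combination h)
  -- the mover criterion
  have hmove : ∀ (h : Equiv.Perm (Vtx p)) (n : ℕ), sectionAt [x] h ((aAut p) ^ n) →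
      ((n : ZMod p) ≠ 0) → h (x :: z :: m₂) ≠ x :: z :: m₂ := by
    intro h n hs hn heq
    have h2 := hs (z :: m₂)
    simp only [List.singleton_append] at h2
    rw [apow_cons, heq] at h2
    simp only [List.cons.injEq, true_and, and_true] at h2
    exact finCast_ne_zero_of_zmod hn (by linear_combination -h2)
  -- builder for exponents M
  have hMex : ∀ V : Fin p, ∃ M : ℕ,
      ((M * (e (offIdx hp.one_lt (x' - (x' - c - k₀) - c))).val : ℕ) : Fin p) = V := by
    intro V
    refine ⟨(psi V * (e (offIdx hp.one_lt k₀))⁻¹).val, ?_⟩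
    rw [hii_idx]
    apply finCast_eq_of_zmod
    push_cast
    rw [val_cast_zmod, val_cast_zmod, mul_assoc, inv_mul_cancel₀ (hnz _), mul_one]
  have hbp : dirAut hp.one_lt c e * (dirAut hp.one_lt c e) ^ (p - 1) = 1 := by
    rw [← pow_succ', show p - 1 + 1 = p from by omega]
    exact dirAut_pow_p hp.one_lt c e
  by_cases hs' : s' = []
  · -- base case : s' is the empty word
    subst hs'
    refine ⟨kap hp.one_lt c e (x' - c), memS _, ?_, ?_⟩
    · rw [kap_cons, if_pos hj, dirAut_nil]
    · exact hmove _ _ (kap_sec_a hp.one_lt c e (x' - c) x hxj)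
        (by rw [val_cast_zmod]; exact hnz _)
  · obtain ⟨y, s₂, rfl⟩ : ∃ y s₂, s' = y :: s₂ := by
      cases s' with
      | nil => exact absurd rfl hs'
      | cons y s₂ => exact ⟨y, s₂, rfl⟩
    have hnc' : ∀ α : ZMod p, ∃ k, e k ≠ α := by
      intro α
      by_contra hcon
      push_neg at hcon
      exact hnc ⟨α, hcon⟩
    by_cases hy : y = c
    · -- spine case
      subst y
      obtain ⟨k2, hk2⟩ := hnc' (e (offIdx hp.one_lt 1))
      obtain ⟨L1, hL1off, hL10⟩ : ∃ L : Fin p, offIdx hp.one_lt L = offIdx hp.one_lt 1 ∧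
          L ≠ 0 := ⟨_, letter_offIdx _ _, letter_ne_zero _⟩
      obtain ⟨L2, hL2off, hL20⟩ : ∃ L : Fin p, offIdx hp.one_lt L = k2 ∧ L ≠ 0 :=
        ⟨_, letter_offIdx _ _, letter_ne_zero _⟩
      obtain ⟨M1, hM1⟩ := hMex L1
      obtain ⟨M3, hM3⟩ := hMex L2
      have hcL1 : c + L1 ≠ c := fun h => hL10 (by linear_combination h)
      have hcL2 : c + L2 ≠ c := fun h => hL20 (by linear_combination h)
      have sC1 := wordC_sec2_spine hp.one_lt c e x' (x' - c) (x' - c - k₀) M1 L1 hj hi hM1 hcL1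
      have sE := wordE_sec2_spine hp.one_lt c e x' (x' - c) (x' - c - k₀) M1 L1 hj hi hM1 hcL1
      have sC3 := wordC_sec2_spine hp.one_lt c e x' (x' - c) (x' - c - k₀) M3 L2 hj hi hM3 hcL2
      rw [show c + L1 - c = L1 from by ring, hL1off] at sC1 sE
      rw [show c + L2 - c = L2 from by ring, hL2off] at sC3
      set e1 := e (offIdx hp.one_lt 1) with he1
      have hδ : e k2 - e1 ≠ 0 := sub_ne_zero_of_ne hk2
      obtain ⟨K, hK⟩ : ∃ K : ℕ, (K : ZMod p) = (- e1) * (e k2 - e1)⁻¹ :=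
        ⟨((- e1) * (e k2 - e1)⁻¹).val, val_cast_zmod _⟩
      refine ⟨kap hp.one_lt c e (x' - c) *
        (wordC hp.one_lt c e (x' - c) (x' - c - k₀) M1 *
          (wordE hp.one_lt c e (x' - c) (x' - c - k₀) M1 *
           wordC hp.one_lt c e (x' - c) (x' - c - k₀) M3) ^ K),
        mul_mem (memS _) (mul_mem (memC _ _ _) (pow_mem (mul_mem (memE _ _ _) (memC _ _ _)) K)),
        ?_, ?_⟩
      · -- fixes x' :: c :: s₂
        have sF := sectionAt_mul sE sC3
        have hF : (aAut p) ^ ((p - 1) * (e1).val) * dirAut hp.one_lt c e *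
            ((dirAut hp.one_lt c e) ^ (p - 1) * (aAut p) ^ (e k2).val) =
            (aAut p) ^ ((p - 1) * (e1).val + (e k2).val) := by
          rw [mul_assoc ((aAut p) ^ ((p - 1) * (e1).val)), ← mul_assoc (dirAut hp.one_lt c e),
            hbp, one_mul, ← pow_add]
        rw [hF] at sF
        have sFK := sectionAt_pow sF K
        rw [← pow_mul] at sFK
        have stot := sectionAt_mul (kap_sec2_spine hp.one_lt c e x' (x' - c) hj)
          (sectionAt_mul sC1 sFK)
        have h1 : dirAut hp.one_lt c e *
            ((dirAut hp.one_lt c e) ^ (p - 1) * (aAut p) ^ (e1).val *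
              (aAut p) ^ (((p - 1) * (e1).val + (e k2).val) * K)) = 1 := by
          rw [mul_assoc ((dirAut hp.one_lt c e) ^ (p - 1)), ← mul_assoc (dirAut hp.one_lt c e),
            hbp, one_mul, ← pow_add]
          apply apow_eq_one
          push_cast
          rw [val_cast_zmod, val_cast_zmod, hK, pm1_cast]
          field_simp
          ring
        rw [h1] at stot
        have := stot s₂
        simpa using this
      · -- moves x :: z :: m₂
        have sxk := kap_sec_a hp.one_lt c e (x' - c) x hxj
        have sx := sectionAt_mul sxk (sectionAt_mul
          (wordC_sec_x hp.one_lt c e (x' - c) (x' - c - k₀) x hxj hxi M1)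
          (sectionAt_pow (sectionAt_mul
            (wordE_sec_x hp.one_lt c e (x' - c) (x' - c - k₀) x hxj hxi M1)
            (wordC_sec_x hp.one_lt c e (x' - c) (x' - c - k₀) x hxj hxi M3)) K))
        have h2 : (aAut p) ^ (e (offIdx hp.one_lt (x - (x' - c) - c))).val *
            ((1 : Equiv.Perm (Vtx p)) * ((1 : Equiv.Perm (Vtx p)) * 1) ^ K) =
            (aAut p) ^ (e (offIdx hp.one_lt (x - (x' - c) - c))).val := by
          simp
        rw [h2] at sx
        exact hmove _ _ sx (by rw [val_cast_zmod]; exact hnz _)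
    · -- off-spine case
      obtain ⟨kst, hks⟩ := hnc' (e (offIdx hp.one_lt (y - c)))
      obtain ⟨L, hLoff, hL0⟩ : ∃ L : Fin p, offIdx hp.one_lt L = kst ∧ L ≠ 0 :=
        ⟨_, letter_offIdx _ _, letter_ne_zero _⟩
      obtain ⟨M, hM⟩ := hMex (c + L - y)
      have hyV : y + (c + L - y) ≠ c := fun h => hL0 (by linear_combination h)
      have sC := wordC_sec2 hp.one_lt c e x' y (x' - c) (x' - c - k₀) M (c + L - y)
        hj hi hM hyV hy
      rw [show y + (c + L - y) - c = L from by ring, hLoff] at sC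
      set E0 := e (offIdx hp.one_lt (y - c)) with hE0
      have hδ : e kst - E0 ≠ 0 := sub_ne_zero_of_ne hks
      obtain ⟨K, hK⟩ : ∃ K : ℕ, (K : ZMod p) = (- E0) * (e kst - E0)⁻¹ :=
        ⟨((- E0) * (e kst - E0)⁻¹).val, val_cast_zmod _⟩
      refine ⟨kap hp.one_lt c e (x' - c) *
          (wordC hp.one_lt c e (x' - c) (x' - c - k₀) M) ^ K,
        mul_mem (memS _) (pow_mem (memC _ _ _) K), ?_, ?_⟩
      · have sCK := sectionAt_pow sC K
        have stot := sectionAt_mul (kap_sec2 hp.one_lt c e x' y (x' - c) hj hy) sCK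
        have h1 : (aAut p) ^ (E0).val *
            ((aAut p) ^ ((p - 1) * (E0).val) * (aAut p) ^ (e kst).val) ^ K = 1 := by
          rw [← pow_add, ← pow_mul, ← pow_add]
          apply apow_eq_one
          push_cast
          rw [val_cast_zmod, val_cast_zmod, hK, pm1_cast]
          field_simp
          ring
        rw [h1] at stot
        have := stot s₂
        simpa using this
      · have sxk := kap_sec_a hp.one_lt c e (x' - c) x hxj
        have sx := sectionAt_mul sxk
          (sectionAt_pow (wordC_sec_x hp.one_lt c e (x' - c) (x' - c - k₀) x hxj hxi M) K)
        have h2 : (aAut p) ^ (e (offIdx hp.one_lt (x - (x' - c) - c))).val *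
            ((1 : Equiv.Perm (Vtx p))) ^ K =
            (aAut p) ^ (e (offIdx hp.one_lt (x - (x' - c) - c))).val := by
          simp
        rw [h2] at sx
        exact hmove _ _ sx (by rw [val_cast_zmod]; exact hnz _)

end MainLevel
section Assemble

lemma incomp_decomp {α : Type*} (σ τ : List α) (h1 : ¬ σ <+: τ) (h2 : ¬ τ <+: σ) :
    ∃ w a a' s s', a ≠ a' ∧ σ = w ++ a :: s ∧ τ = w ++ a' :: s' := by
  induction σ generalizing τ with
  | nil => exact absurd List.nil_prefix h1
  | cons b σ' ih =>
    cases τ with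
    | nil => exact absurd List.nil_prefix h2
    | cons b' τ' =>
      by_cases hb : b = b'
      · subst hb
        have h1' : ¬ σ' <+: τ' := fun h => h1 (by simpa [List.cons_prefix_cons] using h)
        have h2' : ¬ τ' <+: σ' := fun h => h2 (by simpa [List.cons_prefix_cons] using h)
        obtain ⟨w, a, a', s, s', hne, hσ, hτ⟩ := ih τ' h1' h2'
        exact ⟨b :: w, a, a', s, s', hne, by rw [hσ]; rfl, by rw [hτ]; rfl⟩
      · exact ⟨[], b, b', σ', τ', hb, rfl, rfl⟩

end Assemble

theorem stmt3 (p : ℕ) (hp : p.Prime) (hp5 : 5 ≤ p) [NeZero p]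
    (e : Fin (p - 1) → ZMod p)
    (hnc : IsNonConstant e) (hnz : ∀ k, e k ≠ 0) :
    ∀ u u' v : Vtx p, ¬ u <+: u' → ¬ u' <+: u → u <+: v → u ≠ v →
      ∃ g ∈ Subgroup.closure {aAut p, dirAut hp.one_lt (pathLetter 0) e},
        g u' = u' ∧ g v ≠ v := by
  intro u u' v huu' hu'u huv hune
  obtain ⟨t, rfl⟩ := huv
  have ht : t ≠ [] := by
    rintro rfl
    simp at hune
  obtain ⟨t₀, z, rfl⟩ : ∃ t₀ z, t = t₀ ++ [z] := by
    rcases List.eq_nil_or_concat t with h | ⟨t₀, z, h⟩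
    · exact absurd h ht
    · exact ⟨t₀, z, by simpa [List.concat_eq_append] using h⟩
  have h1 : ¬ (u ++ t₀) <+: u' := fun h => huu' ((List.prefix_append u t₀).trans h)
  have h2 : ¬ u' <+: (u ++ t₀) := by
    intro h
    rcases List.prefix_or_prefix_of_prefix h (List.prefix_append u t₀) with h' | h'
    · exact hu'u h'
    · exact huu' h'
  obtain ⟨w, a, a', s, s', hne, hv0, hu'⟩ := incomp_decomp (u ++ t₀) u' h1 h2
  have hv : u ++ (t₀ ++ [z]) = w ++ a :: (s ++ [z]) := by
    rw [← List.append_assoc, hv0]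
    simp
  obtain ⟨h, hhmem, hfix, hmov⟩ := main_level hp hp5 (pathLetter 0) e hnc hnz a a' hne
    s' (s ++ [z]) (by simp)
  obtain ⟨g, hgmem, hgsec⟩ := exists_sectionAt hp (pathLetter 0) e hnz w h hhmem
  refine ⟨g, hgmem, ?_, ?_⟩
  · rw [hu', hgsec (a' :: s'), hfix]
  · rw [hv, hgsec (a :: (s ++ [z]))]
    intro heq
    exact hmov (List.append_cancel_left heq)

end GMS
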